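/- Let u, v, w be 012-strings for Fl(a,b;n) and let P be an equivariant puzzle for Fl(a,b;n) with boundary Δ^{u,v}_w. Then Σ_{s} A_T(s) = C_u ζ^{11} + C_v ζ^{7} + C_w ζ^{3} in ℂ[δ₀,δ₁,δ₂,y₁,…,y_n], where the sum is over all vertical scabs s in P. -/
import Mathlib


/-!
STATEMENT 16: Let u, v, w be 012-strings for Fl(a,b;n) and P an equivariant
puzzle with boundary Δ^{u,v}_w.  Then the sum of the equivariant auras of
the vertical scabs of P equals C_u ζ^{11} + C_v ζ^{7} + C_w ζ^{3} in
ℂ[δ₀,δ₁,δ₂,y₁,…,y_n].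
-/

set_option maxHeartbeats 1000000

open scoped Classical

/-- Puzzle labels are encoded as natural numbers; the meaningful ones are
0–7, and 0, 1, 2 are the *simple* labels. -/
abbrev Label := ℕ

/-- The valid upward triangular puzzle pieces in standard position,
as (left, right, bottom) label triples. -/
def basePieces : List (Label × Label × Label) :=
  [(0,0,0), (1,1,1), (2,2,2), (0,1,3), (1,2,4), (0,2,5), (3,2,6), (0,4,7)]

/-- Valid upward triangular pieces: the base list together with its
120° and 240° rotations. -/
def ValidUp (l r b : Label) : Prop :=
  (l, r, b) ∈ basePieces ∨ (r, b, l) ∈ basePieces ∨ (b, l, r) ∈ basePieces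

/-- Valid downward triangular pieces, with (left, right, top) labels:
precisely the rotations (by 60°, 180° or 300°) of valid upward pieces. -/
def ValidDown (l r t : Label) : Prop := ValidUp r l t

/-- Valid *vertical* equivariant (rhombus) puzzle pieces: opposite sides
carry equal labels, and `ValidEquivVert p q` means that the NW and SE sides
carry `p` while the NE and SW sides carry `q`, where `(p, q)` runs through
the paper's list of label pairs in its fixed orientation. -/
def ValidEquivVert (p q : Label) : Prop :=
  (p, q) ∈ ([(0,1), (1,2), (0,2), (2,3), (0,4), (3,4), (0,6), (2,7)] :
    List (Label × Label))

/-- `s` (restricted to indices `0, …, n-1`) is a 012-string for `Fl(a,b;n)`: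
exactly `a` zeros, `b - a` ones and `n - b` twos. -/
def Is012 (n a b : ℕ) (s : ℕ → ℕ) : Prop :=
  (∀ i, i < n → s i < 3) ∧
  ((Finset.range n).filter fun i => s i = 0).card = a ∧
  ((Finset.range n).filter fun i => s i = 1).card = b - a ∧
  ((Finset.range n).filter fun i => s i = 2).card = n - b

/-- An equivariant puzzle for `Fl(a,b;n)` (an upward triangle of size `n`,
all equivariant pieces vertical), encoded through its dissection into `n`
bottom-row triangles and `n(n-1)/2` small vertical rhombi.  We use skewed
coordinates: `ne x y` is the label of the SW–NE edge from `(x, y)` to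
`(x, y+1)` (the left side of the upward cell `(x, y)`), `nw x y` the label
of the NW–SE edge from `(x+1, y)` to `(x, y+1)` (its right side), and
`hl x y` the label of the horizontal edge from `(x, y)` to `(x+1, y)` (its
bottom side; this value is meaningless when the vertical rhombus containing
it is an equivariant piece).  `isEq x y` records whether the vertical
rhombus whose upward half is the cell `(x, y)` (for `1 ≤ y`,
`x + y < n`) is an equivariant puzzle piece; otherwise this rhombus consists
of two triangular pieces.  The left, right and bottom border segments are
formed by the edges `ne 0 i`, `nw i (n-1-i)` and `hl i 0` for `i < n`. -/
structure EqvPuzzle (n : ℕ) where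
  ne : ℕ → ℕ → Label
  nw : ℕ → ℕ → Label
  hl : ℕ → ℕ → Label
  isEq : ℕ → ℕ → Bool
  bottom_valid : ∀ x, x < n → ValidUp (ne x 0) (nw x 0) (hl x 0)
  rhombus_equiv : ∀ x y, 1 ≤ y → x + y < n → isEq x y = true →
    ne x y = ne (x+1) (y-1) ∧ nw x y = nw x (y-1) ∧
    ValidEquivVert (ne x y) (nw x y)
  rhombus_tri : ∀ x y, 1 ≤ y → x + y < n → isEq x y = false →
    ValidUp (ne x y) (nw x y) (hl x y) ∧
    ValidDown (nw x (y-1)) (ne (x+1) (y-1)) (hl x y)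
  boundary_simple :
    (∀ i, i < n → ne 0 i < 3) ∧ (∀ i, i < n → nw i (n-1-i) < 3) ∧
    (∀ i, i < n → hl i 0 < 3)

/-- `P` has boundary `△^{u,v}_w`: `u`, `v` and `w` are the strings of labels
on the left, right and bottom border segments, all read in left-to-right
order (bottom-to-top on the left border, top-to-bottom on the right one). -/
def HasBoundary {n : ℕ} (P : EqvPuzzle n) (u v w : ℕ → ℕ) : Prop :=
  (∀ i, i < n → P.ne 0 i = u i) ∧
  (∀ i, i < n → P.nw i (n-1-i) = v i) ∧
  (∀ i, i < n → P.hl i 0 = w i)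

/-- The ring ℂ[δ₀,δ₁,δ₂,y₁,…,y_n]. -/
abbrev ERng (n : ℕ) := MvPolynomial (Fin 3 ⊕ Fin n) ℂ

/-- ζ = exp(π i / 6). -/
noncomputable def zet : ℂ := Complex.exp ((Real.pi : ℂ) * Complex.I / 6)

/-- The δ-variable attached to a simple label. -/
noncomputable def dvarE (n : ℕ) (a : ℕ) : ERng n :=
  if h : a < 3 then MvPolynomial.X (Sum.inl (⟨a, h⟩ : Fin 3)) else 0

/-- The variable y_k (0-indexed; `0` outside the range). -/
noncomputable def yvarE (n : ℕ) (k : ℕ) : ERng n :=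
  if h : k < n then MvPolynomial.X (Sum.inr (⟨k, h⟩ : Fin n)) else 0

/-- C_u = Σ_i δ_{u_i} y_i. -/
noncomputable def CstrE (n : ℕ) (s : ℕ → ℕ) : ERng n :=
  ∑ i ∈ Finset.range n, dvarE n (s i) * yvarE n i

/-- `A k a` is the aura of a semi-labeled edge carrying the label `a`, whose
unit normal `zet ^ (2k+1)` points to the side of the label; for a simple
label it is `δ_a` times this unit normal. -/
def AuraSimpleE (n : ℕ) (A : Fin 6 → ℕ → ERng n) : Prop :=
  ∀ (k : Fin 6) (a : ℕ), a < 3 →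
    A k a = MvPolynomial.C (zet ^ (2 * (k : ℕ) + 1)) * dvarE n a

/-- For every valid triangular puzzle piece the auras of its three sides,
labels placed inside, sum to zero (upward and downward rotations). -/
def AuraPieceE (n : ℕ) (A : Fin 6 → ℕ → ERng n) : Prop :=
  ∀ l r b, ValidUp l r b →
    A 5 l + A 3 r + A 1 b = 0 ∧ A 0 r + A 2 l + A 4 b = 0

/-- The equivariant aura of the vertical rhombus of `P` whose upward half is
the cell `(x, y)`: the sum over the six sides of its two triangular pieces,
with labels placed inside, of `weight(e) · A(e)`.  Edges parallel to the
left border have weight `y_{x+y}`, edges parallel to the right border have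
weight `y_x`, bottom border edges `y_x`, other horizontal edges `0`. -/
noncomputable def ATscab {n : ℕ} (P : EqvPuzzle n) (A : Fin 6 → ℕ → ERng n)
    (x y : ℕ) : ERng n :=
  yvarE n (x + y) * A 5 (P.ne x y) + yvarE n x * A 3 (P.nw x y) +
    (if y = 0 then yvarE n x else 0) * A 1 (P.hl x y) +
    yvarE n x * A 0 (P.nw x (y-1)) + yvarE n (x + y) * A 2 (P.ne (x+1) (y-1)) +
    (if y = 0 then yvarE n x else 0) * A 4 (P.hl x y)

/-- The vertical rhombus of `P` at `(x, y)` is a (vertical) scab: two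
triangular pieces that are not 180°-rotations of each other. -/
def IsScabAt {n : ℕ} (P : EqvPuzzle n) (x y : ℕ) : Prop :=
  1 ≤ y ∧ x + y < n ∧ P.isEq x y = false ∧
    ¬ (P.ne (x+1) (y-1) = P.ne x y ∧ P.nw x (y-1) = P.nw x y)

/- ### Auxiliary lemmas -/

lemma validUp_le {l r b : Label} (h : ValidUp l r b) : l ≤ 7 ∧ r ≤ 7 ∧ b ≤ 7 := by
  rcases h with h|h|h <;>
    simp only [basePieces, List.mem_cons, List.not_mem_nil, or_false, Prod.mk.injEq] at h <;>
    rcases h with ⟨rfl,rfl,rfl⟩|⟨rfl,rfl,rfl⟩|⟨rfl,rfl,rfl⟩|⟨rfl,rfl,rfl⟩|⟨rfl,rfl,rfl⟩|⟨rfl,rfl,rfl⟩|⟨rfl,rfl,rfl⟩|⟨rfl,rfl,rfl⟩ <;>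
    refine ⟨by decide, by decide, by decide⟩

lemma zet_pow_six : zet ^ 6 = -1 := by
  rw [zet, ← Complex.exp_nat_mul]
  rw [show ((6:ℕ):ℂ) * ((Real.pi:ℂ) * Complex.I / 6) = Real.pi * Complex.I by push_cast; ring]
  exact Complex.exp_pi_mul_I

lemma keyRel {n} (A : Fin 6 → ℕ → ERng n) (hp : AuraPieceE n A) {l r b : ℕ} (h : ValidUp l r b) :
    (A 5 l + A 2 l) + (A 3 r + A 0 r) + (A 1 b + A 4 b) = 0 := by
  obtain ⟨h1, h2⟩ := hp l r b h
  linear_combination h1 + h2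

lemma negA {n} (A : Fin 6 → ℕ → ERng n) (hA : AuraSimpleE n A) (hp : AuraPieceE n A) :
    ∀ a, a ≤ 7 → (A 5 a + A 2 a = 0) ∧ (A 3 a + A 0 a = 0) ∧ (A 1 a + A 4 a = 0) := by
  have hz' : (MvPolynomial.C zet : ERng n) ^ 6 = -1 := by
    rw [← map_pow, zet_pow_six, map_neg, map_one]
  have hs : ∀ a, a < 3 → (A 5 a + A 2 a = 0) ∧ (A 3 a + A 0 a = 0) ∧ (A 1 a + A 4 a = 0) := by
    intro a ha
    have e5 := hA 5 a ha; have e2 := hA 2 a ha; have e3 := hA 3 a ha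
    have e0 := hA 0 a ha; have e1 := hA 1 a ha; have e4 := hA 4 a ha
    norm_num [show ((5:Fin 6):ℕ) = 5 from rfl, show ((2:Fin 6):ℕ) = 2 from rfl,
      show ((3:Fin 6):ℕ) = 3 from rfl, show ((0:Fin 6):ℕ) = 0 from rfl,
      show ((1:Fin 6):ℕ) = 1 from rfl, show ((4:Fin 6):ℕ) = 4 from rfl] at e5 e2 e3 e0 e1 e4
    refine ⟨?_, ?_, ?_⟩
    · linear_combination e5 + e2 + dvarE n a * (MvPolynomial.C zet)^5 * hz'
    · linear_combination e3 + e0 + dvarE n a * (MvPolynomial.C zet) * hz'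
    · linear_combination e1 + e4 + dvarE n a * (MvPolynomial.C zet)^3 * hz'
  have h0 := hs 0 (by norm_num); have h1 := hs 1 (by norm_num); have h2 := hs 2 (by norm_num)
  have p3_1 : A 1 3 + A 4 3 = 0 := by
    linear_combination keyRel A hp (show ValidUp 0 1 3 by unfold ValidUp basePieces; decide) - h0.1 - h1.2.1
  have p3_3 : A 3 3 + A 0 3 = 0 := by
    linear_combination keyRel A hp (show ValidUp 1 3 0 by unfold ValidUp basePieces; decide) - h1.1 - h0.2.2
  have p3_5 : A 5 3 + A 2 3 = 0 := by
    linear_combination keyRel A hp (show ValidUp 3 0 1 by unfold ValidUp basePieces; decide) - h0.2.1 - h1.2.2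
  have p4_1 : A 1 4 + A 4 4 = 0 := by
    linear_combination keyRel A hp (show ValidUp 1 2 4 by unfold ValidUp basePieces; decide) - h1.1 - h2.2.1
  have p4_3 : A 3 4 + A 0 4 = 0 := by
    linear_combination keyRel A hp (show ValidUp 2 4 1 by unfold ValidUp basePieces; decide) - h2.1 - h1.2.2
  have p4_5 : A 5 4 + A 2 4 = 0 := by
    linear_combination keyRel A hp (show ValidUp 4 1 2 by unfold ValidUp basePieces; decide) - h1.2.1 - h2.2.2
  have p5_1 : A 1 5 + A 4 5 = 0 := by
    linear_combination keyRel A hp (show ValidUp 0 2 5 by unfold ValidUp basePieces; decide) - h0.1 - h2.2.1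
  have p5_3 : A 3 5 + A 0 5 = 0 := by
    linear_combination keyRel A hp (show ValidUp 2 5 0 by unfold ValidUp basePieces; decide) - h2.1 - h0.2.2
  have p5_5 : A 5 5 + A 2 5 = 0 := by
    linear_combination keyRel A hp (show ValidUp 5 0 2 by unfold ValidUp basePieces; decide) - h0.2.1 - h2.2.2
  have p6_1 : A 1 6 + A 4 6 = 0 := by
    linear_combination keyRel A hp (show ValidUp 3 2 6 by unfold ValidUp basePieces; decide) - p3_5 - h2.2.1
  have p6_3 : A 3 6 + A 0 6 = 0 := by
    linear_combination keyRel A hp (show ValidUp 2 6 3 by unfold ValidUp basePieces; decide) - h2.1 - p3_1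
  have p6_5 : A 5 6 + A 2 6 = 0 := by
    linear_combination keyRel A hp (show ValidUp 6 3 2 by unfold ValidUp basePieces; decide) - p3_3 - h2.2.2
  have p7_1 : A 1 7 + A 4 7 = 0 := by
    linear_combination keyRel A hp (show ValidUp 0 4 7 by unfold ValidUp basePieces; decide) - h0.1 - p4_3
  have p7_3 : A 3 7 + A 0 7 = 0 := by
    linear_combination keyRel A hp (show ValidUp 4 7 0 by unfold ValidUp basePieces; decide) - p4_5 - h0.2.2
  have p7_5 : A 5 7 + A 2 7 = 0 := by
    linear_combination keyRel A hp (show ValidUp 7 0 4 by unfold ValidUp basePieces; decide) - h0.2.1 - p4_1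
  intro a ha
  interval_cases a
  · exact h0
  · exact h1
  · exact h2
  · exact ⟨p3_5, p3_3, p3_1⟩
  · exact ⟨p4_5, p4_3, p4_1⟩
  · exact ⟨p5_5, p5_3, p5_1⟩
  · exact ⟨p6_5, p6_3, p6_1⟩
  · exact ⟨p7_5, p7_3, p7_1⟩

open Finset in
lemma telescopeE {M : Type*} [CommRing M] (n x : ℕ) (c : M) (g : ℕ → M) :
    (∑ y ∈ range n, if 1 ≤ y ∧ x + y < n then c * (g y - g (y-1)) else 0)
      = c * (g (n-1-x) - g 0) := by
  rw [← Finset.sum_filter]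
  have hf : (range n).filter (fun y => 1 ≤ y ∧ x + y < n) = Finset.Ico 1 (n - x) := by
    ext y; simp only [mem_filter, mem_range, Finset.mem_Ico]; omega
  rw [hf, Finset.sum_Ico_eq_sum_range]
  have : ∀ k ∈ range (n - x - 1), c * (g (1+k) - g (1+k-1)) = c * (g (k+1) - g k) := by
    intro k _
    have h1 : 1 + k = k + 1 := by omega
    rw [h1, Nat.add_sub_cancel]
  rw [Finset.sum_congr rfl this, ← Finset.mul_sum, Finset.sum_range_sub]
  have : n - x - 1 = n - 1 - x := by omega
  rw [this]

open Finset in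
lemma telescopeD {M : Type*} [CommRing M] (n : ℕ) (c : ℕ → M) (g : ℕ → ℕ → M) :
    (∑ x ∈ range n, ∑ y ∈ range n,
        if 1 ≤ y ∧ x + y < n then c (x+y) * (g x y - g (x+1) (y-1)) else 0)
      = ∑ d ∈ range n, c d * (g 0 d - g d 0) := by
  have lhs1 : (∑ x ∈ range n, ∑ y ∈ range n,
        if 1 ≤ y ∧ x + y < n then c (x+y) * (g x y - g (x+1) (y-1)) else 0)
      = ∑ p ∈ (range n ×ˢ range n).filter (fun p => 1 ≤ p.2 ∧ p.1 + p.2 < n),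
          c (p.1 + p.2) * (g p.1 p.2 - g (p.1+1) (p.2-1)) := by
    rw [Finset.sum_filter, ← Finset.sum_product']
  have rhs0 : (∑ a ∈ range n ×ˢ range n,
        if a.2 < a.1 then c a.1 * (g a.2 (a.1 - a.2) - g (a.2+1) (a.1 - a.2 - 1)) else 0)
      = ∑ d ∈ range n, ∑ x ∈ range n,
          if x < d then c d * (g x (d - x) - g (x+1) (d - x - 1)) else 0 := by
    rw [← Finset.sum_product']
  have rhs1 : (∑ d ∈ range n, c d * (g 0 d - g d 0))
      = ∑ q ∈ (range n ×ˢ range n).filter (fun q => q.2 < q.1),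
          c q.1 * (g q.2 (q.1 - q.2) - g (q.2+1) (q.1 - q.2 - 1)) := by
    rw [Finset.sum_filter, rhs0]
    refine Finset.sum_congr rfl fun d hd => ?_
    rw [Finset.mem_range] at hd
    have h1 : ∀ x ∈ range n, (if x < d then c d * (g x (d - x) - g (x+1) (d - x - 1)) else 0)
        = if x ∈ range d then c d * (g x (d - x) - g (x+1) (d - x - 1)) else 0 := by
      intro x _; simp [Finset.mem_range]
    rw [Finset.sum_congr rfl h1, Finset.sum_ite_mem]
    have h2 : range n ∩ range d = range d := by
      ext i; simp only [Finset.mem_inter, mem_range]; omega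
    rw [h2]
    have h3 : ∀ x ∈ range d, c d * (g x (d - x) - g (x+1) (d - x - 1))
        = c d * (g x (d - x) - g (x+1) (d - (x+1))) := by
      intro x _; rw [Nat.sub_sub]
    rw [Finset.sum_congr rfl h3, ← Finset.mul_sum,
      Finset.sum_range_sub' (fun x => g x (d - x)) d]
    simp
  rw [lhs1, rhs1]
  refine Finset.sum_nbij' (fun p => (p.1 + p.2, p.1)) (fun q => (q.2, q.1 - q.2))
    ?_ ?_ ?_ ?_ ?_
  · intro p hp
    simp only [Finset.mem_filter, Finset.mem_product, mem_range] at hp ⊢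
    omega
  · intro q hq
    simp only [Finset.mem_filter, Finset.mem_product, mem_range] at hq ⊢
    omega
  · intro p hp
    simp only [Finset.mem_filter, Finset.mem_product, mem_range] at hp
    ext <;> simp <;> omega
  · intro q hq
    simp only [Finset.mem_filter, Finset.mem_product, mem_range] at hq
    ext <;> simp <;> omega
  · intro p hp
    simp only [Finset.mem_filter, Finset.mem_product, mem_range] at hp
    have h1 : p.1 + p.2 - p.1 = p.2 := by omega
    simp only [h1]


theorem scab_aura_sum (n a b : ℕ) (hab : a ≤ b) (hbn : b ≤ n)
    (u v w : ℕ → ℕ) (hu : Is012 n a b u) (hv : Is012 n a b v)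
    (hw : Is012 n a b w)
    (P : EqvPuzzle n) (hP : HasBoundary P u v w)
    (A : Fin 6 → ℕ → ERng n) (hA : AuraSimpleE n A) (hp : AuraPieceE n A) :
    (∑ x ∈ Finset.range n, ∑ y ∈ Finset.range n,
        if IsScabAt P x y then ATscab P A x y else 0) =
      CstrE n u * MvPolynomial.C (zet ^ 11) +
        CstrE n v * MvPolynomial.C (zet ^ 7) +
        CstrE n w * MvPolynomial.C (zet ^ 3) := by
  obtain ⟨hPu, hPv, hPw⟩ := hP
  have hN := negA A hA hp
  have hA5 : ∀ m : ℕ, m < 3 → A 5 m = MvPolynomial.C (zet ^ 11) * dvarE n m := by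
    intro m hm
    have h := hA 5 m hm
    rwa [show (2 * ((5:Fin 6):ℕ) + 1) = 11 by rfl] at h
  have hA3 : ∀ m : ℕ, m < 3 → A 3 m = MvPolynomial.C (zet ^ 7) * dvarE n m := by
    intro m hm
    have h := hA 3 m hm
    rwa [show (2 * ((3:Fin 6):ℕ) + 1) = 7 by rfl] at h
  have hA1 : ∀ m : ℕ, m < 3 → A 1 m = MvPolynomial.C (zet ^ 3) * dvarE n m := by
    intro m hm
    have h := hA 1 m hm
    rwa [show (2 * ((1:Fin 6):ℕ) + 1) = 3 by rfl] at h
  have key1 : ∀ x ∈ Finset.range n, ∀ y ∈ Finset.range n,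
      (if IsScabAt P x y then ATscab P A x y else 0) =
      (if 1 ≤ y ∧ x + y < n then
          yvarE n (x+y) * (A 5 (P.ne x y) - A 5 (P.ne (x+1) (y-1))) else 0) +
      (if 1 ≤ y ∧ x + y < n then
          yvarE n x * (A 3 (P.nw x y) - A 3 (P.nw x (y-1))) else 0) := by
    intro x _ y _
    by_cases hg : 1 ≤ y ∧ x + y < n
    · obtain ⟨hy1, hxy⟩ := hg
      have hg' : 1 ≤ y ∧ x + y < n := ⟨hy1, hxy⟩
      have hy0 : ¬ y = 0 := by omega
      rw [if_pos hg', if_pos hg']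
      cases hEq : P.isEq x y with
      | false =>
        obtain ⟨hup, hdown⟩ := P.rhombus_tri x y hy1 hxy hEq
        by_cases hc : P.ne (x+1) (y-1) = P.ne x y ∧ P.nw x (y-1) = P.nw x y
        · rw [if_neg (show ¬ IsScabAt P x y from fun hS => hS.2.2.2 hc)]
          rw [hc.1, hc.2]; ring
        · rw [if_pos (show IsScabAt P x y from ⟨hy1, hxy, hEq, hc⟩)]
          simp only [ATscab, if_neg hy0]
          have hle := validUp_le hdown
          have n1 := (hN _ hle.1).1
          have n2 := (hN _ hle.2.1).2.1
          linear_combination yvarE n (x+y) * n1 + yvarE n x * n2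
      | true =>
        have hns : ¬ IsScabAt P x y := by
          intro hS
          rw [hS.2.2.1] at hEq
          cases hEq
        obtain ⟨he1, he2, -⟩ := P.rhombus_equiv x y hy1 hxy hEq
        rw [if_neg hns, he1, he2]; ring
    · rw [if_neg hg, if_neg hg, if_neg (fun hS => hg ⟨hS.1, hS.2.1⟩)]; ring
  calc
    (∑ x ∈ Finset.range n, ∑ y ∈ Finset.range n,
        if IsScabAt P x y then ATscab P A x y else 0)
      = ∑ x ∈ Finset.range n,
          ((∑ y ∈ Finset.range n, if 1 ≤ y ∧ x + y < n then
              yvarE n (x+y) * (A 5 (P.ne x y) - A 5 (P.ne (x+1) (y-1))) else 0) +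
           ∑ y ∈ Finset.range n, if 1 ≤ y ∧ x + y < n then
              yvarE n x * (A 3 (P.nw x y) - A 3 (P.nw x (y-1))) else 0) := by
        refine Finset.sum_congr rfl fun x hx => ?_
        rw [← Finset.sum_add_distrib]
        exact Finset.sum_congr rfl fun y hy => key1 x hx y hy
    _ = (∑ x ∈ Finset.range n, ∑ y ∈ Finset.range n, if 1 ≤ y ∧ x + y < n then
              yvarE n (x+y) * (A 5 (P.ne x y) - A 5 (P.ne (x+1) (y-1))) else 0) +
        ∑ x ∈ Finset.range n, ∑ y ∈ Finset.range n, if 1 ≤ y ∧ x + y < n then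
              yvarE n x * (A 3 (P.nw x y) - A 3 (P.nw x (y-1))) else 0 :=
        Finset.sum_add_distrib
    _ = (∑ d ∈ Finset.range n, yvarE n d * (A 5 (P.ne 0 d) - A 5 (P.ne d 0))) +
        ∑ x ∈ Finset.range n,
          yvarE n x * (A 3 (P.nw x (n-1-x)) - A 3 (P.nw x 0)) := by
        rw [telescopeD n (yvarE n) (fun x y => A 5 (P.ne x y))]
        congr 1
        exact Finset.sum_congr rfl fun x _ =>
          telescopeE n x (yvarE n x) (fun y => A 3 (P.nw x y))
    _ = ∑ i ∈ Finset.range n,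
          (yvarE n i * (A 5 (P.ne 0 i) - A 5 (P.ne i 0)) +
           yvarE n i * (A 3 (P.nw i (n-1-i)) - A 3 (P.nw i 0))) :=
        Finset.sum_add_distrib.symm
    _ = ∑ i ∈ Finset.range n,
          (dvarE n (u i) * yvarE n i * MvPolynomial.C (zet ^ 11) +
           dvarE n (v i) * yvarE n i * MvPolynomial.C (zet ^ 7) +
           dvarE n (w i) * yvarE n i * MvPolynomial.C (zet ^ 3)) := by
        refine Finset.sum_congr rfl fun i hi => ?_
        rw [Finset.mem_range] at hi
        have hbot := (hp _ _ _ (P.bottom_valid i hi)).1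
        rw [hPw i hi] at hbot
        rw [hPu i hi, hPv i hi]
        have h5u := hA5 (u i) (hu.1 i hi)
        have h3v := hA3 (v i) (hv.1 i hi)
        have h1w := hA1 (w i) (hw.1 i hi)
        linear_combination yvarE n i * h5u + yvarE n i * h3v -
          yvarE n i * hbot + yvarE n i * h1w
    _ = CstrE n u * MvPolynomial.C (zet ^ 11) +
        CstrE n v * MvPolynomial.C (zet ^ 7) +
        CstrE n w * MvPolynomial.C (zet ^ 3) := by
        simp only [CstrE, Finset.sum_mul, ← Finset.sum_add_distrib]
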